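/- Let s be a vertex of G and X, Y ⊆ V \ {s}. Then Pr(R_X) · Pr(R_Y) ≤ Pr(R_{X∪Y}) · Pr(R_{X∩Y}). -/

import Mathlib

set_option linter.unusedSectionVars false


/-!
Percolation on a finite graph `G = (V, E)` in which each edge is either
oriented or unoriented.  An edge `e` has endpoints `ends e : V × V`; if
`oriented e = true` it may be traversed only from `(ends e).1` to `(ends e).2`,
while if `oriented e = false` it may be traversed in either direction.  Each
edge is independently open (`ω e = true`) with probability `p e`; `Pr` is the
resulting product measure on configurations `ω : E → Bool`.
-/

attribute [local instance] Classical.propDecidable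

namespace MixedPerc

variable {V E : Type*}

/-- One step along an open edge, respecting orientations. -/
def Step (ends : E → V × V) (oriented : E → Bool) (ω : E → Bool) (u v : V) : Prop :=
  ∃ e, ω e = true ∧ (ends e = (u, v) ∨ (oriented e = false ∧ ends e = (v, u)))

/-- `Reach ends oriented ω u v` : there is an open path from `u` to `v`
respecting the orientations of the oriented edges. -/
def Reach (ends : E → V × V) (oriented : E → Bool) (ω : E → Bool) (u v : V) : Prop :=
  Relation.ReflTransGen (Step ends oriented ω) u v

/-- The open cluster `C_s(ω)` of `s`: the set of edges lying on some open path
(respecting orientations) starting at `s`. -/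
def Cluster (ends : E → V × V) (oriented : E → Bool) (s : V) (ω : E → Bool) : Set E :=
  {e | ω e = true ∧ (Reach ends oriented ω s (ends e).1 ∨
        (oriented e = false ∧ Reach ends oriented ω s (ends e).2))}

/-- `R_X`: the event that there is no open path (respecting orientations) from
`s` to any vertex of `X`. -/
def RX (ends : E → V × V) (oriented : E → Bool) (s : V) (X : Set V) :
    Set (E → Bool) :=
  {ω | ∀ x ∈ X, ¬ Reach ends oriented ω s x}

/-- The probability of a single configuration under the product measure. -/
noncomputable def weight [Fintype E] (p : E → ℝ) (ω : E → Bool) : ℝ :=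
  ∏ e, if ω e then p e else 1 - p e

/-- The probability of an event `A ⊆ {0,1}^E`. -/
noncomputable def Pr [Fintype E] [DecidableEq E] (p : E → ℝ) (A : Set (E → Bool)) : ℝ :=
  ∑ ω : E → Bool, A.indicator (weight p) ω

/-- Conditional expectation `E[f | B]`. -/
noncomputable def condExp [Fintype E] [DecidableEq E] (p : E → ℝ)
    (f : (E → Bool) → ℝ) (B : Set (E → Bool)) : ℝ :=
  (∑ ω : E → Bool, B.indicator (fun ω' => weight p ω' * f ω') ω) / Pr p B

/-- Ahlswede–Daykin four-number lemma. -/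
lemma ad_four {a₀ a₁ b₀ b₁ c₀ c₁ d₀ d₁ : ℝ}
    (ha₀ : 0 ≤ a₀) (ha₁ : 0 ≤ a₁) (hb₀ : 0 ≤ b₀) (hb₁ : 0 ≤ b₁)
    (hc₀ : 0 ≤ c₀) (hc₁ : 0 ≤ c₁) (hd₀ : 0 ≤ d₀) (hd₁ : 0 ≤ d₁)
    (h00 : a₀ * b₀ ≤ c₀ * d₀) (h11 : a₁ * b₁ ≤ c₁ * d₁)
    (h01 : a₀ * b₁ ≤ c₀ * d₁) (h10 : a₁ * b₀ ≤ c₀ * d₁) :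
    (a₀ + a₁) * (b₀ + b₁) ≤ (c₀ + c₁) * (d₀ + d₁) := by
  have key : a₀ * b₁ + a₁ * b₀ ≤ c₀ * d₁ + c₁ * d₀ := by
    rcases eq_or_lt_of_le (mul_nonneg hc₀ hd₁) with h0 | hpos
    · have h1 : a₀ * b₁ = 0 :=
        le_antisymm (h01.trans h0.symm.le) (mul_nonneg ha₀ hb₁)
      have h2 : a₁ * b₀ = 0 :=
        le_antisymm (h10.trans h0.symm.le) (mul_nonneg ha₁ hb₀)
      have h3 := mul_nonneg hc₁ hd₀
      linarith
    · have h3 : 0 ≤ (c₀ * d₁ - a₀ * b₁) * (c₀ * d₁ - a₁ * b₀) :=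
        mul_nonneg (by linarith) (by linarith)
      have h4 : (a₀ * b₁) * (a₁ * b₀) ≤ (c₀ * d₀) * (c₁ * d₁) := by
        calc (a₀ * b₁) * (a₁ * b₀) = (a₀ * b₀) * (a₁ * b₁) := by ring
        _ ≤ (c₀ * d₀) * (c₁ * d₁) :=
          mul_le_mul h00 h11 (mul_nonneg ha₁ hb₁) (mul_nonneg hc₀ hd₀)
      have h5 : (c₀ * d₁) * (a₀ * b₁ + a₁ * b₀) ≤ (c₀ * d₁) * (c₀ * d₁ + c₁ * d₀) := by
        nlinarith
      exact le_of_mul_le_mul_left h5 hpos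
  nlinarith

section Dev
variable [Fintype E] [DecidableEq E]
variable (ends : E → V × V) (oriented : E → Bool) (p : E → ℝ)

/-- Mask a configuration to an active edge set `K`. -/
noncomputable def mk' (K : Finset E) (ω : E → Bool) : E → Bool :=
  fun e => ω e && decide (e ∈ K)

/-- Avoidance event: no open path (within active edges `K`) from `S` to `T`. -/
def Av (K : Finset E) (S T : Set V) : Set (E → Bool) :=
  {ω | ∀ s ∈ S, ∀ x ∈ T, ¬ Reach ends oriented (mk' K ω) s x}

noncomputable def F (K : Finset E) (S T : Set V) : ℝ :=
  Pr p (Av ends oriented K S T)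

variable {ends oriented p}

lemma weight_nonneg (hp : ∀ e, 0 ≤ p e ∧ p e ≤ 1) (ω : E → Bool) :
    0 ≤ weight p ω := by
  refine Finset.prod_nonneg fun e _ => ?_
  by_cases h : ω e = true <;> simp [h]
  · exact (hp e).1
  · linarith [(hp e).2]

lemma Pr_nonneg (hp : ∀ e, 0 ≤ p e ∧ p e ≤ 1) (A : Set (E → Bool)) :
    0 ≤ Pr p A :=
  Finset.sum_nonneg fun ω _ =>
    Set.indicator_nonneg (fun ω' _ => weight_nonneg hp ω') ω

lemma Pr_mono (hp : ∀ e, 0 ≤ p e ∧ p e ≤ 1) {A B : Set (E → Bool)} (h : A ⊆ B) :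
    Pr p A ≤ Pr p B := by
  refine Finset.sum_le_sum fun ω _ => ?_
  by_cases hω : ω ∈ A
  · rw [Set.indicator_of_mem hω, Set.indicator_of_mem (h hω)]
  · rw [Set.indicator_of_notMem hω]
    exact Set.indicator_nonneg (fun ω' _ => weight_nonneg hp ω') ω

set_option maxHeartbeats 1000000 in
lemma sum_weight : ∑ ω : E → Bool, weight p ω = 1 := by
  unfold weight
  have h := Finset.sum_prod_piFinset (Finset.univ : Finset Bool)
      (fun (e : E) (b : Bool) => if b then p e else 1 - p e)
  rw [Fintype.piFinset_univ] at h
  rw [h]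
  have h1 : ∀ e : E, ∑ b : Bool, (if b then p e else 1 - p e) = 1 := by
    intro e; rw [Fintype.sum_bool]; simp
  simp [h1]

lemma Pr_univ : Pr p (Set.univ : Set (E → Bool)) = 1 := by
  unfold Pr; rw [Set.indicator_univ]; exact sum_weight

lemma Pr_empty : Pr p (∅ : Set (E → Bool)) = 0 := by
  unfold Pr; simp

lemma step_mono {ω ω' : E → Bool} (h : ∀ e, ω e = true → ω' e = true) {u v : V} :
    Step ends oriented ω u v → Step ends oriented ω' u v := by
  rintro ⟨e, he, hd⟩; exact ⟨e, h e he, hd⟩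

lemma reach_mono {ω ω' : E → Bool} (h : ∀ e, ω e = true → ω' e = true) {u v : V} :
    Reach ends oriented ω u v → Reach ends oriented ω' u v :=
  Relation.ReflTransGen.mono (r := Step ends oriented ω) (p := Step ends oriented ω')
    (fun _ _ hs => step_mono h hs) u v

lemma mk'_mono_K {K K' : Finset E} (h : K' ⊆ K) (ω : E → Bool) (e : E) :
    mk' K' ω e = true → mk' K ω e = true := by
  simp only [mk', Bool.and_eq_true, decide_eq_true_eq]
  exact fun ⟨h1, h2⟩ => ⟨h1, h h2⟩

lemma mk'_eq_of_false {ω : E → Bool} {e : E} (hω : ω e = false) (K : Finset E) :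
    mk' (K.erase e) ω = mk' K ω := by
  funext i
  by_cases hi : i = e
  · subst hi; simp [mk', hω]
  · simp [mk', Finset.mem_erase, hi]

lemma mk'_update (K : Finset E) (e : E) (ω : E → Bool) (b : Bool) :
    mk' (K.erase e) (Function.update ω e b) = mk' (K.erase e) ω := by
  funext i
  by_cases hi : i = e
  · subst hi; simp [mk', Finset.notMem_erase]
  · simp [mk', Function.update_of_ne hi]


lemma mem_Av_iff {K : Finset E} {S T : Set V} {ω : E → Bool} :
    ω ∈ Av ends oriented K S T ↔
      ∀ x ∈ T, ¬ ∃ s ∈ S, Reach ends oriented (mk' K ω) s x := by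
  constructor
  · rintro h x hx ⟨s, hs, hr⟩; exact h s hs x hx hr
  · intro h s hs x hx hr; exact h x hx ⟨s, hs, hr⟩

/-- Opening a usable edge `e` (from `u ∈ S` to `t`) amounts to adding `t` to the
sources on the smaller edge set. -/
lemma reach_open {K : Finset E} {e : E} {u t : V} {ω : E → Bool} {S : Set V}
    (he : e ∈ K) (hu : u ∈ S)
    (hus : ends e = (u, t) ∨ (oriented e = false ∧ ends e = (t, u)))
    (hω : ω e = true) (x : V) :
    (∃ s ∈ S, Reach ends oriented (mk' K ω) s x) ↔
      (∃ s ∈ insert t S, Reach ends oriented (mk' (K.erase e) ω) s x) := by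
  constructor
  · rintro ⟨s, hs, hr⟩
    induction hr with
    | refl => exact ⟨s, Set.mem_insert_of_mem _ hs, Relation.ReflTransGen.refl⟩
    | tail hab hbc ih =>
      rename_i b c
      obtain ⟨f, hf, hdf⟩ := hbc
      by_cases hfe : f = e
      · subst hfe
        have hct : c = t ∨ c = u := by
          rcases hdf with h1 | ⟨_, h1⟩ <;> rcases hus with h2 | ⟨_, h2⟩
          · exact Or.inl (congrArg Prod.snd (h1.symm.trans h2)).symm.symm
          · exact Or.inr (congrArg Prod.snd (h1.symm.trans h2))
          · exact Or.inr (congrArg Prod.fst (h1.symm.trans h2))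
          · exact Or.inl (congrArg Prod.fst (h1.symm.trans h2))
        rcases hct with rfl | rfl
        · exact ⟨c, Set.mem_insert _ _, Relation.ReflTransGen.refl⟩
        · exact ⟨c, Set.mem_insert_of_mem _ hu, Relation.ReflTransGen.refl⟩
      · obtain ⟨s', hs', hr'⟩ := ih
        refine ⟨s', hs', hr'.tail ⟨f, ?_, hdf⟩⟩
        simp only [mk', Bool.and_eq_true, decide_eq_true_eq] at hf ⊢
        exact ⟨hf.1, Finset.mem_erase.2 ⟨hfe, hf.2⟩⟩
  · rintro ⟨s, hs, hr⟩
    have hr' : Reach ends oriented (mk' K ω) s x :=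
      reach_mono (mk'_mono_K (Finset.erase_subset e K) ω) hr
    rcases Set.mem_insert_iff.1 hs with rfl | hs'
    · refine ⟨u, hu, Relation.ReflTransGen.head ⟨e, ?_, hus⟩ hr'⟩
      simp [mk', hω, he]
    · exact ⟨s, hs', hr'⟩

lemma sum_split (e : E) (g : (E → Bool) → ℝ) :
    ∑ ω : E → Bool, g ω =
      ∑ ω ∈ Finset.univ.filter (fun ω : E → Bool => ω e = false),
        (g ω + g (Function.update ω e true)) := by
  rw [Finset.sum_add_distrib,
    ← Finset.sum_filter_add_sum_filter_not Finset.univ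
      (fun ω : E → Bool => ω e = false) g]
  congr 1
  refine Finset.sum_bij' (i := fun ω _ => Function.update ω e false)
    (j := fun ω _ => Function.update ω e true) ?_ ?_ ?_ ?_ ?_
  · intro a ha
    simp only [Finset.mem_filter, Finset.mem_univ, true_and]
    exact Function.update_self e false a
  · intro a ha
    simp only [Finset.mem_filter, Finset.mem_univ, true_and, not_false_eq_true]
    simp [Function.update_self]
  · intro a ha
    simp only [Finset.mem_filter, Finset.mem_univ, true_and] at ha
    rw [Function.update_idem]
    have h2 : a e = true := by
      revert ha; cases a e <;> simp
    conv_rhs => rw [← Function.update_eq_self e a]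
    rw [h2]
  · intro a ha
    simp only [Finset.mem_filter, Finset.mem_univ, true_and] at ha
    rw [Function.update_idem]
    conv_rhs => rw [← Function.update_eq_self e a]
    rw [ha]
  · intro a ha
    simp only [Finset.mem_filter, Finset.mem_univ, true_and] at ha
    have h2 : a e = true := by
      revert ha; cases a e <;> simp
    have h3 : Function.update a e true = a := by
      conv_rhs => rw [← Function.update_eq_self e a]
      rw [h2]
    rw [Function.update_idem, h3]


set_option maxHeartbeats 1000000 in
/-- Conditioning on a usable edge: deletion–contraction decomposition. -/
lemma F_decomp {K : Finset E} {e : E} {u t : V} {S : Set V}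
    (he : e ∈ K) (hu : u ∈ S)
    (hus : ends e = (u, t) ∨ (oriented e = false ∧ ends e = (t, u))) (T : Set V) :
    F ends oriented p K S T =
      (1 - p e) * F ends oriented p (K.erase e) S T
        + p e * F ends oriented p (K.erase e) (insert t S) T := by
  set W' : (E → Bool) → ℝ :=
    fun ω => ∏ i ∈ Finset.univ.erase e, (if ω i then p i else 1 - p i) with hW'
  have hWup : ∀ (ω : E → Bool) (b : Bool), W' (Function.update ω e b) = W' ω := by
    intro ω b
    refine Finset.prod_congr rfl fun i hi => ?_
    rw [Function.update_of_ne (Finset.ne_of_mem_erase hi)]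
  have hw : ∀ ω : E → Bool,
      weight p ω = (if ω e then p e else 1 - p e) * W' ω := by
    intro ω
    exact (Finset.mul_prod_erase _ _ (Finset.mem_univ e)).symm
  -- event identifications
  have hev0 : ∀ ω : E → Bool, ω e = false →
      (ω ∈ Av ends oriented K S T ↔ ω ∈ Av ends oriented (K.erase e) S T) := by
    intro ω h
    unfold Av
    simp only [Set.mem_setOf_eq, mk'_eq_of_false h]
  have hAvK' : ∀ (SS : Set V) (ρ : E → Bool) (b : Bool),
      ((Function.update ρ e b) ∈ Av ends oriented (K.erase e) SS T ↔
        ρ ∈ Av ends oriented (K.erase e) SS T) := by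
    intro SS ρ b
    unfold Av
    simp only [Set.mem_setOf_eq, mk'_update]
  have hev1 : ∀ ρ : E → Bool,
      ((Function.update ρ e true) ∈ Av ends oriented K S T ↔
        ρ ∈ Av ends oriented (K.erase e) (insert t S) T) := by
    intro ρ
    rw [mem_Av_iff, mem_Av_iff]
    refine forall₂_congr fun x hx => not_congr ?_
    rw [reach_open he hu hus (Function.update_self e true ρ) x, mk'_update]
  -- the common index set
  set D : Finset (E → Bool) :=
    Finset.univ.filter (fun ω : E → Bool => ω e = false) with hD
  have hmemD : ∀ ρ ∈ D, ρ e = false := by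
    intro ρ hρ; exact (Finset.mem_filter.1 hρ).2
  -- two formulas
  have split2 : ∀ SS : Set V,
      F ends oriented p (K.erase e) SS T =
        ∑ ρ ∈ D, (Av ends oriented (K.erase e) SS T).indicator W' ρ := by
    intro SS
    unfold F Pr
    rw [sum_split e]
    refine Finset.sum_congr rfl fun ρ hρ => ?_
    have hρe := hmemD ρ hρ
    have hup : (Function.update ρ e true) e = true := Function.update_self e true ρ
    rw [Set.indicator_apply, Set.indicator_apply, Set.indicator_apply,
      hw ρ, hw (Function.update ρ e true), hWup, hρe, hup]
    by_cases hm : ρ ∈ Av ends oriented (K.erase e) SS T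
    · rw [if_pos hm, if_pos ((hAvK' SS ρ true).2 hm), if_pos hm]
      simp only [if_true, Bool.false_eq_true, if_false]
      ring
    · rw [if_neg hm, if_neg (fun h => hm ((hAvK' SS ρ true).1 h)), if_neg hm]
      ring
  have split1 : F ends oriented p K S T =
      ∑ ρ ∈ D, ((1 - p e) * (Av ends oriented (K.erase e) S T).indicator W' ρ
        + p e * (Av ends oriented (K.erase e) (insert t S) T).indicator W' ρ) := by
    unfold F Pr
    rw [sum_split e]
    refine Finset.sum_congr rfl fun ρ hρ => ?_
    have hρe := hmemD ρ hρ
    have hup : (Function.update ρ e true) e = true := Function.update_self e true ρ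
    rw [Set.indicator_apply, Set.indicator_apply, Set.indicator_apply, Set.indicator_apply,
      hw ρ, hw (Function.update ρ e true), hWup, hρe, hup]
    simp only [if_true, Bool.false_eq_true, if_false]
    by_cases hm1 : ρ ∈ Av ends oriented K S T
    · rw [if_pos hm1, if_pos ((hev0 ρ hρe).1 hm1)]
      by_cases hm2 : (Function.update ρ e true) ∈ Av ends oriented K S T
      · rw [if_pos hm2, if_pos ((hev1 ρ).1 hm2)]; try ring
      · rw [if_neg hm2, if_neg (fun h => hm2 ((hev1 ρ).2 h))]; try ring
    · rw [if_neg hm1, if_neg (fun h => hm1 ((hev0 ρ hρe).2 h))]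
      by_cases hm2 : (Function.update ρ e true) ∈ Av ends oriented K S T
      · rw [if_pos hm2, if_pos ((hev1 ρ).1 hm2)]; try ring
      · rw [if_neg hm2, if_neg (fun h => hm2 ((hev1 ρ).2 h))]; try ring
  rw [split1, split2 S, split2 (insert t S), Finset.mul_sum, Finset.mul_sum,
    ← Finset.sum_add_distrib]


lemma weight_inf_sup (ω ω' : E → Bool) :
    weight p (ω ⊓ ω') * weight p (ω ⊔ ω') = weight p ω * weight p ω' := by
  unfold weight
  rw [← Finset.prod_mul_distrib, ← Finset.prod_mul_distrib]
  refine Finset.prod_congr rfl fun e _ => ?_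
  have hb : ∀ a b : Bool, a ⊓ b = (a && b) ∧ a ⊔ b = (a || b) := by decide
  have hinf : (ω ⊓ ω') e = (ω e && ω' e) := by
    rw [Pi.inf_apply]; exact (hb _ _).1
  have hsup : (ω ⊔ ω') e = (ω e || ω' e) := by
    rw [Pi.sup_apply]; exact (hb _ _).2
  rw [hinf, hsup]
  cases h1 : ω e <;> cases h2 : ω' e <;> simp <;> ring

lemma bool_le_imp {ω ω' : E → Bool} (h : ω ≤ ω') (e : E) :
    ω e = true → ω' e = true := by
  intro he
  have := h e
  rw [he] at this
  exact le_antisymm (Bool.le_true _) this |>.symm ▸ rfl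

/-- Harris's inequality for two decreasing events. -/
lemma harris (hp : ∀ e, 0 ≤ p e ∧ p e ≤ 1) {A B : Set (E → Bool)}
    (hA : ∀ ⦃ω ω' : E → Bool⦄, ω ≤ ω' → ω' ∈ A → ω ∈ A)
    (hB : ∀ ⦃ω ω' : E → Bool⦄, ω ≤ ω' → ω' ∈ B → ω ∈ B) :
    Pr p A * Pr p B ≤ Pr p (A ∩ B) := by
  have h4 := four_functions_theorem_univ
    (A.indicator (weight p)) (B.indicator (weight p))
    ((A ∩ B).indicator (weight p)) (weight p)
    (fun ω => Set.indicator_nonneg (fun ω' _ => weight_nonneg hp ω') ω)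
    (fun ω => Set.indicator_nonneg (fun ω' _ => weight_nonneg hp ω') ω)
    (fun ω => Set.indicator_nonneg (fun ω' _ => weight_nonneg hp ω') ω)
    (fun ω => weight_nonneg hp ω) ?_
  · calc Pr p A * Pr p B ≤ Pr p (A ∩ B) * ∑ ω : E → Bool, weight p ω := h4
      _ = Pr p (A ∩ B) := by rw [sum_weight, mul_one]
  · intro a b
    by_cases ha : a ∈ A
    · by_cases hb : b ∈ B
      · rw [Set.indicator_of_mem ha, Set.indicator_of_mem hb,
          Set.indicator_of_mem (Set.mem_inter (hA inf_le_left ha) (hB inf_le_right hb))]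
        rw [weight_inf_sup]
      · rw [Set.indicator_of_notMem hb, mul_zero]
        exact mul_nonneg
          (Set.indicator_nonneg (fun ω' _ => weight_nonneg hp ω') _)
          (weight_nonneg hp _)
    · rw [Set.indicator_of_notMem ha, zero_mul]
      exact mul_nonneg
        (Set.indicator_nonneg (fun ω' _ => weight_nonneg hp ω') _)
        (weight_nonneg hp _)

lemma Av_decreasing {K : Finset E} {S T : Set V} :
    ∀ ⦃ω ω' : E → Bool⦄, ω ≤ ω' →
      ω' ∈ Av ends oriented K S T → ω ∈ Av ends oriented K S T := by
  intro ω ω' h hm s hs x hx hr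
  refine hm s hs x hx (reach_mono (fun e he => ?_) hr)
  simp only [mk', Bool.and_eq_true, decide_eq_true_eq] at he ⊢
  exact ⟨bool_le_imp h e he.1, he.2⟩

lemma Av_anti_source {K : Finset E} {S₁ S₂ T : Set V} (h : S₁ ⊆ S₂) :
    Av ends oriented K S₂ T ⊆ Av ends oriented K S₁ T := by
  intro ω hm s hs x hx hr
  exact hm s (h hs) x hx hr

lemma F_nonneg (hp : ∀ e, 0 ≤ p e ∧ p e ≤ 1) (K : Finset E) (S T : Set V) :
    0 ≤ F ends oriented p K S T := Pr_nonneg hp _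

lemma F_anti_source (hp : ∀ e, 0 ≤ p e ∧ p e ≤ 1) {K : Finset E}
    {S₁ S₂ : Set V} (T : Set V) (h : S₁ ⊆ S₂) :
    F ends oriented p K S₂ T ≤ F ends oriented p K S₁ T :=
  Pr_mono hp (Av_anti_source h)


/-- The case where no active edge is usable from `S ∩ S'`. -/
lemma no_usable_case (hp : ∀ e, 0 ≤ p e ∧ p e ≤ 1) {K : Finset E} {S S' X Y : Set V}
    (hNU : ¬ ∃ e ∈ K, ∃ u ∈ S ∩ S', ∃ t : V,
      (ends e = (u, t) ∨ (oriented e = false ∧ ends e = (t, u)))) :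
    F ends oriented p K S X * F ends oriented p K S' Y ≤
      F ends oriented p K (S ∩ S') (X ∪ Y) * F ends oriented p K (S ∪ S') (X ∩ Y) := by
  push_neg at hNU
  have noReach : ∀ (ω : E → Bool) (c : V), c ∈ S ∩ S' → ∀ x : V,
      Reach ends oriented (mk' K ω) c x → x = c := by
    intro ω c hc x hr
    rcases (Relation.ReflTransGen.cases_head hr) with rfl | ⟨b, hstep, _⟩
    · rfl
    · exfalso
      obtain ⟨f, hf, hdf⟩ := hstep
      simp only [mk', Bool.and_eq_true, decide_eq_true_eq] at hf
      rcases hdf with h1 | ⟨ho, h1⟩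
      · exact (hNU f hf.2 c hc b).1 h1
      · exact (hNU f hf.2 c hc b).2 ho h1
  by_cases hZ : ∃ c, c ∈ (S ∩ S') ∩ (X ∪ Y)
  · obtain ⟨c, hc, hcZ⟩ := hZ
    rcases hcZ with hcX | hcY
    · have h0 : F ends oriented p K S X = 0 := by
        unfold F Pr
        rw [show Av ends oriented K S X = (∅ : Set (E → Bool)) from ?_]
        · simp
        · ext ω
          simp only [Set.mem_empty_iff_false, iff_false]
          intro hm
          exact hm c hc.1 c hcX Relation.ReflTransGen.refl
      rw [h0, zero_mul]
      exact mul_nonneg (F_nonneg hp _ _ _) (F_nonneg hp _ _ _)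
    · have h0 : F ends oriented p K S' Y = 0 := by
        unfold F Pr
        rw [show Av ends oriented K S' Y = (∅ : Set (E → Bool)) from ?_]
        · simp
        · ext ω
          simp only [Set.mem_empty_iff_false, iff_false]
          intro hm
          exact hm c hc.2 c hcY Relation.ReflTransGen.refl
      rw [h0, mul_zero]
      exact mul_nonneg (F_nonneg hp _ _ _) (F_nonneg hp _ _ _)
  · push_neg at hZ
    have h1 : F ends oriented p K (S ∩ S') (X ∪ Y) = 1 := by
      unfold F Pr
      rw [show Av ends oriented K (S ∩ S') (X ∪ Y) = (Set.univ : Set (E → Bool)) from ?_]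
      · rw [Set.indicator_univ]; exact sum_weight
      · ext ω
        simp only [Set.mem_univ, iff_true]
        intro c hc x hx hr
        rw [noReach ω c hc x hr] at hx
        exact hZ c ⟨hc, hx⟩
    rw [h1, one_mul]
    calc F ends oriented p K S X * F ends oriented p K S' Y
        ≤ Pr p (Av ends oriented K S X ∩ Av ends oriented K S' Y) :=
          harris hp Av_decreasing Av_decreasing
      _ ≤ F ends oriented p K (S ∪ S') (X ∩ Y) := by
          refine Pr_mono hp ?_
          rintro ω ⟨hA, hB⟩ s hs x hx hr
          rcases hs with hs | hs
          · exact hA s hs x hx.1 hr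
          · exact hB s hs x hx.2 hr

set_option maxHeartbeats 1000000 in
/-- The key two-source inequality, by induction on the number of active edges. -/
lemma key (hp : ∀ e, 0 ≤ p e ∧ p e ≤ 1) :
    ∀ (n : ℕ) (K : Finset E), K.card ≤ n → ∀ S S' X Y : Set V,
      F ends oriented p K S X * F ends oriented p K S' Y ≤
        F ends oriented p K (S ∩ S') (X ∪ Y) * F ends oriented p K (S ∪ S') (X ∩ Y) := by
  intro n
  induction n with
  | zero =>
    intro K hK S S' X Y
    have hKe : K = ∅ := Finset.card_eq_zero.1 (Nat.le_zero.1 hK)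
    refine no_usable_case hp ?_
    rintro ⟨e, he, -⟩
    simp [hKe] at he
  | succ n ih =>
    intro K hK S S' X Y
    by_cases hexists : ∃ e ∈ K, ∃ u ∈ S ∩ S', ∃ t : V,
        (ends e = (u, t) ∨ (oriented e = false ∧ ends e = (t, u)))
    · obtain ⟨e, he, u, hu, t, hus⟩ := hexists
      have hcard : (K.erase e).card ≤ n := by
        rw [Finset.card_erase_of_mem he]; omega
      have hq : (0:ℝ) ≤ 1 - p e := by linarith [(hp e).2]
      have hpe : (0:ℝ) ≤ p e := (hp e).1
      have hiSi : insert t S ∩ insert t S' = insert t (S ∩ S') := by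
        ext v; simp only [Set.mem_inter_iff, Set.mem_insert_iff]; tauto
      have hiSu : insert t S ∪ insert t S' = insert t (S ∪ S') := by
        ext v; simp only [Set.mem_union, Set.mem_insert_iff]; tauto
      have hSu1 : S ∪ insert t S' = insert t (S ∪ S') := by
        ext v; simp only [Set.mem_union, Set.mem_insert_iff]; tauto
      have hSu2 : insert t S ∪ S' = insert t (S ∪ S') := by
        ext v; simp only [Set.mem_union, Set.mem_insert_iff]; tauto
      have hss1 : S ∩ S' ⊆ S ∩ insert t S' :=
        Set.inter_subset_inter_right _ (Set.subset_insert _ _)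
      have hss2 : S ∩ S' ⊆ insert t S ∩ S' :=
        Set.inter_subset_inter_left _ (Set.subset_insert _ _)
      rw [F_decomp he hu.1 hus X, F_decomp he hu.2 hus Y,
        F_decomp he hu hus (X ∪ Y),
        F_decomp he (Set.mem_union_left _ hu.1) hus (X ∩ Y)]
      have hF : ∀ (SS TT : Set V), 0 ≤ F ends oriented p (K.erase e) SS TT :=
        fun SS TT => F_nonneg hp _ _ _
      refine ad_four (mul_nonneg hq (hF _ _)) (mul_nonneg hpe (hF _ _))
        (mul_nonneg hq (hF _ _)) (mul_nonneg hpe (hF _ _))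
        (mul_nonneg hq (hF _ _)) (mul_nonneg hpe (hF _ _))
        (mul_nonneg hq (hF _ _)) (mul_nonneg hpe (hF _ _)) ?_ ?_ ?_ ?_
      · -- closed/closed
        have h := ih (K.erase e) hcard S S' X Y
        calc ((1 - p e) * F ends oriented p (K.erase e) S X) *
              ((1 - p e) * F ends oriented p (K.erase e) S' Y)
            = ((1 - p e) * (1 - p e)) *
              (F ends oriented p (K.erase e) S X * F ends oriented p (K.erase e) S' Y) := by
              ring
          _ ≤ ((1 - p e) * (1 - p e)) *
              (F ends oriented p (K.erase e) (S ∩ S') (X ∪ Y) *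
                F ends oriented p (K.erase e) (S ∪ S') (X ∩ Y)) :=
              mul_le_mul_of_nonneg_left h (mul_nonneg hq hq)
          _ = _ := by ring
      · -- open/open
        have h := ih (K.erase e) hcard (insert t S) (insert t S') X Y
        rw [hiSi, hiSu] at h
        calc (p e * F ends oriented p (K.erase e) (insert t S) X) *
              (p e * F ends oriented p (K.erase e) (insert t S') Y)
            = (p e * p e) *
              (F ends oriented p (K.erase e) (insert t S) X *
                F ends oriented p (K.erase e) (insert t S') Y) := by ring
          _ ≤ (p e * p e) *
              (F ends oriented p (K.erase e) (insert t (S ∩ S')) (X ∪ Y) *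
                F ends oriented p (K.erase e) (insert t (S ∪ S')) (X ∩ Y)) :=
              mul_le_mul_of_nonneg_left h (mul_nonneg hpe hpe)
          _ = _ := by ring
      · -- closed/open
        have h := ih (K.erase e) hcard S (insert t S') X Y
        rw [hSu1] at h
        have h2 : F ends oriented p (K.erase e) (S ∩ insert t S') (X ∪ Y) ≤
            F ends oriented p (K.erase e) (S ∩ S') (X ∪ Y) :=
          F_anti_source hp _ hss1
        have h3 : F ends oriented p (K.erase e) S X *
              F ends oriented p (K.erase e) (insert t S') Y ≤
            F ends oriented p (K.erase e) (S ∩ S') (X ∪ Y) *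
              F ends oriented p (K.erase e) (insert t (S ∪ S')) (X ∩ Y) :=
          h.trans (mul_le_mul_of_nonneg_right h2 (hF _ _))
        calc ((1 - p e) * F ends oriented p (K.erase e) S X) *
              (p e * F ends oriented p (K.erase e) (insert t S') Y)
            = ((1 - p e) * p e) *
              (F ends oriented p (K.erase e) S X *
                F ends oriented p (K.erase e) (insert t S') Y) := by ring
          _ ≤ ((1 - p e) * p e) *
              (F ends oriented p (K.erase e) (S ∩ S') (X ∪ Y) *
                F ends oriented p (K.erase e) (insert t (S ∪ S')) (X ∩ Y)) :=
              mul_le_mul_of_nonneg_left h3 (mul_nonneg hq hpe)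
          _ = _ := by ring
      · -- open/closed
        have h := ih (K.erase e) hcard (insert t S) S' X Y
        rw [hSu2] at h
        have h2 : F ends oriented p (K.erase e) (insert t S ∩ S') (X ∪ Y) ≤
            F ends oriented p (K.erase e) (S ∩ S') (X ∪ Y) :=
          F_anti_source hp _ hss2
        have h3 : F ends oriented p (K.erase e) (insert t S) X *
              F ends oriented p (K.erase e) S' Y ≤
            F ends oriented p (K.erase e) (S ∩ S') (X ∪ Y) *
              F ends oriented p (K.erase e) (insert t (S ∪ S')) (X ∩ Y) :=
          h.trans (mul_le_mul_of_nonneg_right h2 (hF _ _))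
        calc (p e * F ends oriented p (K.erase e) (insert t S) X) *
              ((1 - p e) * F ends oriented p (K.erase e) S' Y)
            = ((1 - p e) * p e) *
              (F ends oriented p (K.erase e) (insert t S) X *
                F ends oriented p (K.erase e) S' Y) := by ring
          _ ≤ ((1 - p e) * p e) *
              (F ends oriented p (K.erase e) (S ∩ S') (X ∪ Y) *
                F ends oriented p (K.erase e) (insert t (S ∪ S')) (X ∩ Y)) :=
              mul_le_mul_of_nonneg_left h3 (mul_nonneg hq hpe)
          _ = _ := by ring
    · exact no_usable_case hp hexists

end Dev

/-- inequality (13) of the paper. For `X, Y ⊆ V \ {s}`,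
`Pr(R_X) · Pr(R_Y) ≤ Pr(R_{X∪Y}) · Pr(R_{X∩Y})`. -/
theorem stmt15 [Fintype V] [Fintype E] [DecidableEq E]
    (ends : E → V × V) (oriented : E → Bool)
    (p : E → ℝ) (hp : ∀ e, 0 ≤ p e ∧ p e ≤ 1)
    (s : V) (X Y : Set V) (hX : s ∉ X) (hY : s ∉ Y) :
    Pr p (RX ends oriented s X) * Pr p (RX ends oriented s Y) ≤
      Pr p (RX ends oriented s (X ∪ Y)) *
        Pr p (RX ends oriented s (X ∩ Y)) := by
  -- proof
  classical
  have hAv : ∀ T : Set V, RX ends oriented s T = Av ends oriented (Finset.univ : Finset E) {s} T := by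
    intro T
    have hmk : ∀ ω : E → Bool, mk' (Finset.univ : Finset E) ω = ω := by
      intro ω; funext e; simp [mk']
    ext ω
    simp only [RX, Av, Set.mem_setOf_eq, hmk, Set.mem_singleton_iff]
    constructor
    · intro h v hv x hx; subst hv; exact h x hx
    · intro h x hx; exact h s rfl x hx
  have h := key (ends := ends) (oriented := oriented) (p := p) hp
      (Finset.univ : Finset E).card (Finset.univ : Finset E) le_rfl {s} {s} X Y
  rw [Set.inter_self, Set.union_self] at h
  unfold F at h
  rw [hAv X, hAv Y, hAv (X ∪ Y), hAv (X ∩ Y)]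
  exact h

end MixedPerc
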